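/- Let T ∈ (0,∞) and let f : [0,T) → (0,∞) be continuous with lim_{t→T} f(t) = ∞. Then there exists a sequence {t_k} ⊆ [0,T) such that t_k → T and (∫₀^{t_k} f(τ) dτ) / f(t_k) → 0 as k → ∞. -/

import Mathlib

open MeasureTheory Filter Complex Topology ENNReal

noncomputable section

/-- Euclidean space ℝⁿ. -/
abbrev Euc (n : ℕ) : Type := EuclideanSpace ℝ (Fin n)

/-- L² norm of a function on ℝⁿ. -/
noncomputable def L2norm {n : ℕ} {F : Type*} [NormedAddCommGroup F] (f : Euc n → F) : ℝ :=
  (∫ x : Euc n, ‖f x‖ ^ 2) ^ ((1:ℝ)/2)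

/-- L^p norm (p real) of a function on ℝⁿ. -/
noncomputable def LpNorm' {n : ℕ} {F : Type*} [NormedAddCommGroup F] (p : ℝ) (f : Euc n → F) : ℝ :=
  (∫ x : Euc n, ‖f x‖ ^ p) ^ (1/p)

/-- Laplacian, as the sum of second directional derivatives along coordinate axes. -/
noncomputable def lap {n : ℕ} {F : Type*} [NormedAddCommGroup F] [NormedSpace ℝ F]
    (f : Euc n → F) (x : Euc n) : F :=
  ∑ i : Fin n, fderiv ℝ (fun y => fderiv ℝ f y (EuclideanSpace.single i 1)) x
    (EuclideanSpace.single i 1)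

/-- Squared pointwise norm of the gradient. -/
noncomputable def gradSq {n : ℕ} (f : Euc n → ℂ) (x : Euc n) : ℝ :=
  ∑ i : Fin n, ‖fderiv ℝ f x (EuclideanSpace.single i 1)‖ ^ 2

/-- L² norm of the gradient ‖∇f‖_{L²}. -/
noncomputable def gradL2 {n : ℕ} (f : Euc n → ℂ) : ℝ :=
  (∫ x : Euc n, gradSq f x) ^ ((1:ℝ)/2)

/-- Membership in H¹(ℝⁿ): f and ∇f lie in L². -/
def InH1 {n : ℕ} (f : Euc n → ℂ) : Prop :=
  MemLp f 2 volume ∧ MemLp (fun x => fderiv ℝ f x) 2 volume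

/-- Membership in the weighted space ℋ¹ = {φ ∈ H¹ : xφ ∈ L²}. -/
def InH1w {n : ℕ} (f : Euc n → ℂ) : Prop :=
  InH1 f ∧ MemLp (fun x : Euc n => ‖x‖ * ‖f x‖) 2 volume

/-- `Q` is a positive radial H¹ solution of ΔQ + |Q|^{4/n} Q = Q (ground state). -/
def IsGroundState {n : ℕ} (Q : Euc n → ℝ) : Prop :=
  (∀ x, 0 < Q x) ∧ (∀ x y : Euc n, ‖x‖ = ‖y‖ → Q x = Q y) ∧
  MemLp Q 2 volume ∧ MemLp (fun x => fderiv ℝ Q x) 2 volume ∧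
  ∀ x, lap Q x + |Q x| ^ ((4:ℝ)/(n:ℝ)) * Q x = Q x

/-- Solution on [0,T), with values in ℋ¹, of the damped NLS with Stark potential
`i uₜ = -Δu + (E⋅x) u - |u|^{p-1} u - i a u` (understood pointwise in (t,x)). -/
def IsSolStark {n : ℕ} (a : ℝ) (Ev : Euc n) (p : ℝ) (T : ℝ≥0∞) (u : ℝ → Euc n → ℂ) : Prop :=
  ∀ t : ℝ, 0 ≤ t → ENNReal.ofReal t < T →
    InH1w (u t) ∧
    (∀ x, DifferentiableAt ℝ (fun s => u s x) t) ∧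
    Differentiable ℝ (u t) ∧ Differentiable ℝ (fun y => fderiv ℝ (u t) y) ∧
    ∀ x, Complex.I * deriv (fun s => u s x) t =
      - lap (u t) x + (((inner ℝ Ev x : ℝ)) : ℂ) * u t x
        - ((‖u t x‖ ^ (p - 1) : ℝ) : ℂ) * u t x - Complex.I * (a : ℂ) * u t x

/-- Solution on [0,T), with values in H¹, of the damped NLS
`i φₜ = -Δφ - |φ|^{p-1} φ - i a φ`. -/
def IsSolDamped {n : ℕ} (a : ℝ) (p : ℝ) (T : ℝ≥0∞) (u : ℝ → Euc n → ℂ) : Prop :=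
  ∀ t : ℝ, 0 ≤ t → ENNReal.ofReal t < T →
    InH1 (u t) ∧
    (∀ x, DifferentiableAt ℝ (fun s => u s x) t) ∧
    Differentiable ℝ (u t) ∧ Differentiable ℝ (fun y => fderiv ℝ (u t) y) ∧
    ∀ x, Complex.I * deriv (fun s => u s x) t =
      - lap (u t) x - ((‖u t x‖ ^ (p - 1) : ℝ) : ℂ) * u t x - Complex.I * (a : ℂ) * u t x

/-- Solution on [0,T), with values in Σ = ℋ¹ = H¹ ∩ {xφ ∈ L²}, of the damped NLS. -/
def IsSolDampedW {n : ℕ} (a : ℝ) (p : ℝ) (T : ℝ≥0∞) (u : ℝ → Euc n → ℂ) : Prop :=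
  ∀ t : ℝ, 0 ≤ t → ENNReal.ofReal t < T →
    InH1w (u t) ∧
    (∀ x, DifferentiableAt ℝ (fun s => u s x) t) ∧
    Differentiable ℝ (u t) ∧ Differentiable ℝ (fun y => fderiv ℝ (u t) y) ∧
    ∀ x, Complex.I * deriv (fun s => u s x) t =
      - lap (u t) x - ((‖u t x‖ ^ (p - 1) : ℝ) : ℂ) * u t x - Complex.I * (a : ℂ) * u t x

/-- Maximal solution of the damped NLS with Stark potential: a solution on [0,T)
that does not extend to a solution on any larger interval. -/
def IsMaxSolStark {n : ℕ} (a : ℝ) (Ev : Euc n) (p : ℝ) (T : ℝ≥0∞) (u : ℝ → Euc n → ℂ) : Prop :=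
  IsSolStark a Ev p T u ∧
  ∀ (T' : ℝ≥0∞) (u' : ℝ → Euc n → ℂ), T ≤ T' → IsSolStark a Ev p T' u' →
    (∀ t : ℝ, 0 ≤ t → ENNReal.ofReal t < T → u' t = u t) → T' = T

/-- Maximal solution of the damped NLS with values in Σ. -/
def IsMaxSolDampedW {n : ℕ} (a : ℝ) (p : ℝ) (T : ℝ≥0∞) (u : ℝ → Euc n → ℂ) : Prop :=
  IsSolDampedW a p T u ∧
  ∀ (T' : ℝ≥0∞) (u' : ℝ → Euc n → ℂ), T ≤ T' → IsSolDampedW a p T' u' →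
    (∀ t : ℝ, 0 ≤ t → ENNReal.ofReal t < T → u' t = u t) → T' = T

/-- Free energy E₀(f) = ‖∇f‖₂² - (2/(p+1)) ‖f‖_{p+1}^{p+1}. -/
noncomputable def freeEnergy {n : ℕ} (p : ℝ) (f : Euc n → ℂ) : ℝ :=
  (∫ x : Euc n, gradSq f x) - (2 / (p + 1)) * ∫ x : Euc n, ‖f x‖ ^ (p + 1)

/-- Stark energy E_V(f) = ∫ (|∇f|² + (E⋅x)|f|² - (2/(p+1)) |f|^{p+1}). -/
noncomputable def starkEnergy {n : ℕ} (p : ℝ) (Ev : Euc n) (f : Euc n → ℂ) : ℝ :=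
  ∫ x : Euc n, (gradSq f x + (inner ℝ Ev x : ℝ) * ‖f x‖ ^ 2
    - (2 / (p + 1)) * ‖f x‖ ^ (p + 1))

/-- The quantity ∫ E ⋅ (f ∇f̄) dx. -/
noncomputable def starkFlux {n : ℕ} (Ev : Euc n) (f : Euc n → ℂ) : ℂ :=
  ∫ x : Euc n, ∑ i : Fin n, ((Ev i : ℝ) : ℂ) * f x *
    fderiv ℝ (fun y => (starRingEnd ℂ) (f y)) x (EuclideanSpace.single i 1)

/-- i-th component of the momentum P(f) = Im ∫ f̄ ∇f dx. -/
noncomputable def momentum {n : ℕ} (f : Euc n → ℂ) (i : Fin n) : ℝ :=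
  (∫ x : Euc n, (starRingEnd ℂ) (f x) * fderiv ℝ f x (EuclideanSpace.single i 1)).im

/-- The log-log blow-up rate (log|log(T*-t)| / (T*-t))^{1/2}. -/
noncomputable def loglogRate (Tstar t : ℝ) : ℝ :=
  (Real.log |Real.log (Tstar - t)| / (Tstar - t)) ^ ((1:ℝ)/2)

/-- Pointwise (classical) solution of the damped NLS (no integrability required). -/
def PtSolDamped {n : ℕ} (a : ℝ) (p : ℝ) (T : ℝ≥0∞) (u : ℝ → Euc n → ℂ) : Prop :=
  ∀ t : ℝ, 0 ≤ t → ENNReal.ofReal t < T →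
    (∀ x, DifferentiableAt ℝ (fun s => u s x) t) ∧
    Differentiable ℝ (u t) ∧ Differentiable ℝ (fun y => fderiv ℝ (u t) y) ∧
    ∀ x, Complex.I * deriv (fun s => u s x) t =
      - lap (u t) x - ((‖u t x‖ ^ (p - 1) : ℝ) : ℂ) * u t x - Complex.I * (a : ℂ) * u t x

/-- Pointwise (classical) solution of the damped NLS with Stark potential. -/
def PtSolStark {n : ℕ} (a : ℝ) (Ev : Euc n) (p : ℝ) (T : ℝ≥0∞) (u : ℝ → Euc n → ℂ) : Prop :=
  ∀ t : ℝ, 0 ≤ t → ENNReal.ofReal t < T →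
    (∀ x, DifferentiableAt ℝ (fun s => u s x) t) ∧
    Differentiable ℝ (u t) ∧ Differentiable ℝ (fun y => fderiv ℝ (u t) y) ∧
    ∀ x, Complex.I * deriv (fun s => u s x) t =
      - lap (u t) x + (((inner ℝ Ev x : ℝ)) : ℂ) * u t x
        - ((‖u t x‖ ^ (p - 1) : ℝ) : ℂ) * u t x - Complex.I * (a : ℂ) * u t x

/-- The Avron–Herbst transform u(t,x) = φ(t, x + t²E) e^{-i(tE⋅x + |E|²t³/3)}. -/
noncomputable def ahTransform {n : ℕ} (Ev : Euc n) (φ : ℝ → Euc n → ℂ) : ℝ → Euc n → ℂ :=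
  fun t x => φ t (x + t ^ 2 • Ev) *
    Complex.exp (-Complex.I * ((t * (inner ℝ Ev x : ℝ) + ‖Ev‖ ^ 2 * t ^ 3 / 3 : ℝ) : ℂ))

/-- The inverse Avron–Herbst transform φ(t,x) = u(t, x - t²E) e^{i(tE⋅x - 2|E|²t³/3)}. -/
noncomputable def ahInverse {n : ℕ} (Ev : Euc n) (u : ℝ → Euc n → ℂ) : ℝ → Euc n → ℂ :=
  fun t x => u t (x - t ^ 2 • Ev) *
    Complex.exp (Complex.I * ((t * (inner ℝ Ev x : ℝ) - 2 * ‖Ev‖ ^ 2 * t ^ 3 / 3 : ℝ) : ℂ))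

/-- H¹ inner product pairing ⟨f, g⟩_{H¹} = ∫ (ḡ f + ∇ḡ ⋅ ∇f). -/
noncomputable def H1inner {n : ℕ} (f g : Euc n → ℂ) : ℂ :=
  ∫ x : Euc n, ((starRingEnd ℂ) (g x) * f x +
    ∑ i : Fin n, (starRingEnd ℂ) (fderiv ℝ g x (EuclideanSpace.single i 1)) *
      fderiv ℝ f x (EuclideanSpace.single i 1))

/-- If f : [0,T) → (0,∞) is continuous with f(t) → ∞ as t → T < ∞, then
there is a sequence t_k → T in [0,T) with (∫₀^{t_k} f)/f(t_k) → 0. -/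
theorem stmt14_integral_ratio_seq
    (T : ℝ) (hT : 0 < T) (f : ℝ → ℝ)
    (hf : ContinuousOn f (Set.Ico 0 T)) (hpos : ∀ t ∈ Set.Ico (0:ℝ) T, 0 < f t)
    (hlim : Tendsto f (𝓝[<] T) atTop) :
    ∃ t : ℕ → ℝ, (∀ k, t k ∈ Set.Ico (0:ℝ) T) ∧ Tendsto t atTop (𝓝 T) ∧
      Tendsto (fun k => (∫ τ in (0:ℝ)..(t k), f τ) / f (t k)) atTop (𝓝 0) := by
  set I : ℝ → ℝ := fun t => ∫ τ in (0:ℝ)..t, f τ with hIdef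
  have hfo : ContinuousOn f (Set.Ioo 0 T) := hf.mono (fun x hx => ⟨le_of_lt hx.1, hx.2⟩)
  have hint : ∀ t ∈ Set.Ico (0:ℝ) T, IntervalIntegrable f MeasureTheory.volume 0 t := by
    intro t ht
    apply ContinuousOn.intervalIntegrable
    apply hf.mono
    rw [Set.uIcc_of_le ht.1]
    exact fun x hx => ⟨hx.1, lt_of_le_of_lt hx.2 ht.2⟩
  have hInn : ∀ t ∈ Set.Ico (0:ℝ) T, 0 ≤ I t := by
    intro t ht
    apply intervalIntegral.integral_nonneg ht.1
    intro x hx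
    exact (hpos x ⟨hx.1, lt_of_le_of_lt hx.2 ht.2⟩).le
  have hderiv : ∀ t ∈ Set.Ioo (0:ℝ) T, HasDerivAt I (f t) t := by
    intro t ht
    exact intervalIntegral.integral_hasDerivAt_right
      (hint t ⟨ht.1.le, ht.2⟩)
      (hfo.stronglyMeasurableAtFilter isOpen_Ioo t ht)
      (hfo.continuousAt (isOpen_Ioo.mem_nhds ht))
  -- Key claim
  have key : ∀ ε : ℝ, 0 < ε → ∀ s ∈ Set.Ico (0:ℝ) T, ∃ r ∈ Set.Ioo s T, I r < ε * f r := by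
    intro ε hε s hs
    by_contra h
    push_neg at h
    set s' : ℝ := (s + T) / 2 with hs'def
    have hs's : s < s' := by simp only [hs'def]; linarith [hs.2]
    have hs'T : s' < T := by simp only [hs'def]; linarith [hs.2]
    have hs'0 : 0 < s' := by simp only [hs'def]; linarith [hs.1]
    set M : ℝ := I s' * Real.exp (ε⁻¹ * T) with hMdef
    have hbound : ∀ r ∈ Set.Ico s' T, I r ≤ M := by
      intro r hr
      have hgr := norm_le_gronwallBound_of_norm_deriv_right_le
        (f := I) (f' := f) (δ := I s') (K := ε⁻¹) (ε := 0) (a := s') (b := r)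
        (fun x hx => ((hderiv x ⟨lt_of_lt_of_le hs'0 hx.1,
          lt_of_le_of_lt hx.2 hr.2⟩).continuousAt).continuousWithinAt)
        (fun x hx => ((hderiv x ⟨lt_of_lt_of_le hs'0 hx.1,
          hx.2.trans hr.2⟩).hasDerivWithinAt))
        ?_ ?_ r ⟨hr.1, le_refl r⟩
      · have hIr0 : 0 ≤ I r := hInn r ⟨(hs'0.trans_le hr.1).le, hr.2⟩
        rw [Real.norm_of_nonneg hIr0, gronwallBound_ε0] at hgr
        refine hgr.trans ?_
        have hIs'0 : 0 ≤ I s' := hInn s' ⟨hs'0.le, hs'T⟩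
        apply mul_le_mul_of_nonneg_left _ hIs'0
        apply Real.exp_le_exp.mpr
        have : r - s' ≤ T := by
          have := hr.2
          linarith [hs'0]
        exact mul_le_mul_of_nonneg_left this (inv_nonneg.mpr hε.le)
      · rw [Real.norm_of_nonneg (hInn s' ⟨hs'0.le, hs'T⟩)]
      · intro x hx
        have hxIoo : x ∈ Set.Ioo s T := ⟨hs's.trans_le hx.1, hx.2.trans hr.2⟩
        have hfx : 0 < f x := hpos x ⟨(hs'0.trans_le hx.1).le, hxIoo.2⟩
        have hIx : ε * f x ≤ I x := h x hxIoo
        have hIx0 : 0 ≤ I x := hInn x ⟨(hs'0.trans_le hx.1).le, hxIoo.2⟩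
        rw [Real.norm_of_nonneg hfx.le, Real.norm_of_nonneg hIx0]
        rw [add_zero]
        have h2 : f x ≤ I x / ε := (le_div_iff₀' hε).mpr hIx
        calc f x ≤ I x / ε := h2
          _ = ε⁻¹ * I x := by ring
    -- contradiction with f → ∞
    have hev : ∀ᶠ r in 𝓝[<] T, M / ε < f r := hlim.eventually (eventually_gt_atTop (M / ε))
    have hmem : Set.Ioo s' T ∈ 𝓝[<] T := Ioo_mem_nhdsLT_of_mem ⟨hs'T, le_refl T⟩
    obtain ⟨r, hrb, hrm⟩ := (hev.and (eventually_of_mem hmem (fun x hx => hx))).exists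
    have h1 : ε * f r ≤ I r := h r ⟨hs's.trans hrm.1, hrm.2⟩
    have h2 : I r ≤ M := hbound r ⟨hrm.1.le, hrm.2⟩
    have : f r ≤ M / ε := by
      rw [le_div_iff₀ hε]
      calc f r * ε = ε * f r := by ring
        _ ≤ M := h1.trans h2
    linarith
  -- construct sequence
  have hchoice : ∀ k : ℕ, ∃ r ∈ Set.Ioo (max (T - 1/(k+1)) 0) T, I r < (1/(k+1)) * f r := by
    intro k
    refine key (1/(k+1)) (by positivity) _ ⟨le_max_right _ _, ?_⟩
    apply max_lt _ hT
    have : (0:ℝ) < 1/(k+1) := by positivity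
    linarith
  choose t ht hratio using hchoice
  have htmem : ∀ k, t k ∈ Set.Ico (0:ℝ) T := fun k =>
    ⟨((le_max_right _ 0).trans_lt (ht k).1).le, (ht k).2⟩
  refine ⟨t, htmem, ?_, ?_⟩
  · have h0 : Tendsto (fun k : ℕ => T - 1/((k:ℝ)+1)) atTop (𝓝 T) := by
      have h1 : Tendsto (fun k : ℕ => 1/((k:ℝ)+1)) atTop (𝓝 0) :=
        tendsto_one_div_add_atTop_nhds_zero_nat
      simpa using Tendsto.const_sub T h1
    refine tendsto_of_tendsto_of_tendsto_of_le_of_le h0 tendsto_const_nhds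
      (fun k => ((le_max_left _ _).trans_lt (ht k).1).le)
      (fun k => (ht k).2.le)
  · refine tendsto_of_tendsto_of_tendsto_of_le_of_le
      (tendsto_const_nhds (x := (0:ℝ))) tendsto_one_div_add_atTop_nhds_zero_nat
      ?_ ?_
    · intro k
      exact div_nonneg (hInn (t k) (htmem k)) (hpos (t k) (htmem k)).le
    · intro k
      rw [div_le_iff₀ (hpos (t k) (htmem k))]
      have h := (hratio k).le
      simp only [mul_comm] at h ⊢
      simpa using h
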